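/- If H_X is dense in L²(P_X) modulo constants, then for every sub-σ-field G of σ(X), H_X is relatively universal with respect to G; i.e., for every ε > 0, the ε-measurable class (H_X)_G(ε) is dense modulo constants in L²(P_X)_G. -/

import Mathlib

open MeasureTheory

noncomputable def pcov {Ω : Type*} {mΩ : MeasurableSpace Ω} (μ : Measure Ω)
    (f g : Ω → ℝ) : ℝ :=
  ∫ ω, (f ω - ∫ x, f x ∂μ) * (g ω - ∫ x, g x ∂μ) ∂μ

noncomputable def pvar {Ω : Type*} {mΩ : MeasurableSpace Ω} (μ : Measure Ω)
    (f : Ω → ℝ) : ℝ :=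
  pcov μ f f

noncomputable def evar {Ω : Type*} {mΩ : MeasurableSpace Ω} (μ : Measure Ω)
    (G : MeasurableSpace Ω) (f : Ω → ℝ) : ℝ :=
  ∫ ω, (f ω - (μ[f|G]) ω) ^ 2 ∂μ

-- bridge: condexp agrees with condexpL2
lemma my_condexp_ae_eq_condexpL2 {α : Type*} {m m0 : MeasurableSpace α} (hm : m ≤ m0)
    (μ : Measure α) [IsProbabilityMeasure μ] (f : Lp ℝ 2 μ) :
    μ[(f : α → ℝ)|m] =ᵐ[μ] (condExpL2 ℝ ℝ hm f : α → ℝ) := by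
  haveI : SigmaFinite (μ.trim hm) := by infer_instance
  refine (ae_eq_condExp_of_forall_setIntegral_eq hm
    ((Lp.memLp f).integrable one_le_two) ?_ ?_ ?_).symm
  · intro s hs hμs
    exact integrableOn_condExpL2_of_measure_ne_top hm hμs.ne f
  · intro s hs hμs
    exact integral_condExpL2_eq hm f hs hμs.ne
  · exact aestronglyMeasurable_condExpL2 hm f

lemma my_memℒp_condexp {α : Type*} {m m0 : MeasurableSpace α} (hm : m ≤ m0)
    (μ : Measure α) [IsProbabilityMeasure μ] {v : α → ℝ} (hv : MemLp v 2 μ) :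
    MemLp (μ[v|m]) 2 μ := by
  have h1 : μ[v|m] =ᵐ[μ] μ[(hv.toLp v : α → ℝ)|m] := condExp_congr_ae (hv.coeFn_toLp).symm
  have h2 := my_condexp_ae_eq_condexpL2 hm μ (hv.toLp v)
  exact (Lp.memLp ((condExpL2 ℝ ℝ hm (hv.toLp v) : lpMeas ℝ ℝ m 2 μ) : Lp ℝ 2 μ)).ae_eq (h1.trans h2).symm

lemma my_key {α : Type*} {m m0 : MeasurableSpace α} (hm : m ≤ m0)
    (μ : Measure α) [IsProbabilityMeasure μ] {v : α → ℝ} (hv : MemLp v 2 μ) :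
    ∫ ω, (v ω - (μ[v|m]) ω) ^ 2 ∂μ ≤ ∫ ω, (v ω) ^ 2 ∂μ := by
  haveI : SigmaFinite (μ.trim hm) := by infer_instance
  set w : α → ℝ := μ[v|m] with hw
  have hwmem : MemLp w 2 μ := my_memℒp_condexp hm μ hv
  have hwv : Integrable (w * v) μ := by
    have := hv.smul (r := 1) hwmem
    rw [smul_eq_mul] at this
    exact memLp_one_iff_integrable.mp this
  have hww : Integrable (fun ω => w ω * w ω) μ := by
    have := hwmem.smul (r := 1) hwmem
    rw [smul_eq_mul] at this
    exact memLp_one_iff_integrable.mp this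
  have hvv : Integrable (fun ω => v ω ^ 2) μ := hv.integrable_sq
  have hwwsq : Integrable (fun ω => w ω ^ 2) μ := hwmem.integrable_sq
  -- cross term
  have hcross : ∫ ω, w ω * v ω ∂μ = ∫ ω, w ω * w ω ∂μ := by
    have hpull : μ[w * v|m] =ᵐ[μ] w * μ[v|m] :=
      condExp_mul_of_stronglyMeasurable_left stronglyMeasurable_condExp hwv (hv.integrable one_le_two)
    calc ∫ ω, w ω * v ω ∂μ = ∫ ω, (w * v) ω ∂μ := rfl
      _ = ∫ ω, (μ[w * v|m]) ω ∂μ := (integral_condExp hm).symm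
      _ = ∫ ω, (w * μ[v|m]) ω ∂μ := integral_congr_ae hpull
      _ = ∫ ω, w ω * w ω ∂μ := rfl
  have hexpand : ∀ ω, (v ω - w ω) ^ 2 = v ω ^ 2 - (2 * (w ω * v ω) - w ω * w ω) := by
    intro ω; ring
  rw [show (fun ω => (v ω - w ω) ^ 2) = fun ω => v ω ^ 2 - (2 * (w ω * v ω) - w ω * w ω) from
    funext hexpand]
  have h2wv : Integrable (fun ω => 2 * (w ω * v ω)) μ := hwv.const_mul 2
  have hrest : Integrable (fun ω => 2 * (w ω * v ω) - w ω * w ω) μ := h2wv.sub hww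
  rw [integral_sub hvv hrest, integral_sub h2wv hww, integral_const_mul]
  have : ∫ ω, w ω * v ω ∂μ = ∫ ω, w ω * w ω ∂μ := hcross
  rw [this]
  have hnn : 0 ≤ ∫ ω, w ω * w ω ∂μ := integral_nonneg fun ω => mul_self_nonneg _
  linarith

/-- Theorem: relative universality: if `H_X` is dense in `L²(P_X)` modulo
constants, then for every sub-σ-field `G` of `σ(X)` (= the ambient σ-field `mΩ`), `H_X` is
relatively universal with respect to `G`: for every `ε > 0`, the `ε`-measurable class
`(H_X)_G(ε)` is dense modulo constants in `L²(P_X)_G`. -/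
theorem stmt_10 {Ω : Type*} {mΩ : MeasurableSpace Ω} (μ : Measure Ω) [IsProbabilityMeasure μ]
    {H : Type*} [NormedAddCommGroup H] [InnerProductSpace ℝ H] [CompleteSpace H]
    (ev : H →ₗ[ℝ] Ω → ℝ)
    (hmem : ∀ f : H, MemLp (ev f) 2 μ)
    (C : ℝ) (hC : 0 < C)
    (hdom : ∀ f : H, eLpNorm (ev f) 2 μ ≤ ENNReal.ofReal (C * ‖f‖))
    (hdense : ∀ h : Ω → ℝ, MemLp h 2 μ → ∀ δ > (0 : ℝ), ∃ f : H, pvar μ (h - ev f) < δ)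
    (G : MeasurableSpace Ω) (hG : G ≤ mΩ) :
    ∀ ε > (0 : ℝ), ∀ h : Ω → ℝ, MemLp h 2 μ →
      (∃ g : Ω → ℝ, Measurable[G] g ∧ h =ᵐ[μ] g) →
      ∀ δ > (0 : ℝ), ∃ f : H, evar μ G (ev f) < ε ∧ pvar μ (h - ev f) < δ := by
  intro ε hε h hh hmeas δ hδ
  obtain ⟨g, hgmeas, hhg⟩ := hmeas
  haveI : SigmaFinite (μ.trim hG) := by infer_instance
  obtain ⟨f, hf⟩ := hdense h hh (min ε δ) (lt_min hε hδ)
  refine ⟨f, ?_, hf.trans_le (min_le_right _ _)⟩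
  -- notation
  set u : Ω → ℝ := h - ev f with hu_def
  have hu : MemLp u 2 μ := hh.sub (hmem f)
  set c : ℝ := ∫ ω, u ω ∂μ with hc_def
  set v : Ω → ℝ := fun ω => u ω - c with hv_def
  have hv : MemLp v 2 μ := hu.sub (memLp_const c)
  -- pvar μ u = ∫ v^2
  have hpvar : pvar μ u = ∫ ω, v ω ^ 2 ∂μ := by
    unfold pvar pcov
    exact integral_congr_ae (Filter.Eventually.of_forall fun ω => by simp [hv_def, sq, hc_def])
  -- conditional expectation facts
  have hh_int : Integrable h μ := hh.integrable one_le_two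
  have hev_int : Integrable (ev f) μ := (hmem f).integrable one_le_two
  have hu_int : Integrable u μ := hu.integrable one_le_two
  have hcondh : μ[h|G] =ᵐ[μ] h := by
    refine condExp_of_aestronglyMeasurable' hG ⟨g, ?_, hhg⟩ hh_int
    exact Measurable.stronglyMeasurable hgmeas
  have hcondu : μ[u|G] =ᵐ[μ] μ[h|G] - μ[ev f|G] := condExp_sub hh_int hev_int G
  have hcondv : μ[v|G] =ᵐ[μ] μ[u|G] - fun _ => c := by
    have h1 : μ[v|G] =ᵐ[μ] μ[u|G] - μ[fun _ => c|G] := condExp_sub hu_int (integrable_const c) G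
    refine h1.trans ?_
    have h2 : μ[fun _ => c|G] = fun _ => c := condExp_const hG c
    rw [h2]
  -- a.e. identity:  ev f - μ[ev f|G] = -(v - μ[v|G])
  have hae : (fun ω => (ev f ω - (μ[ev f|G]) ω) ^ 2)
      =ᵐ[μ] fun ω => (v ω - (μ[v|G]) ω) ^ 2 := by
    filter_upwards [hcondh, hcondu, hcondv] with ω h1 h2 h3
    have h2' : (μ[u|G]) ω = (μ[h|G]) ω - (μ[ev f|G]) ω := by
      simpa using h2
    have h3' : (μ[v|G]) ω = (μ[u|G]) ω - c := by
      simpa using h3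
    have hu' : u ω = h ω - ev f ω := rfl
    have hv' : v ω = u ω - c := rfl
    rw [hv', h3', h2', h1, hu']
    ring
  have hevar : evar μ G (ev f) = ∫ ω, (v ω - (μ[v|G]) ω) ^ 2 ∂μ := by
    unfold evar
    exact integral_congr_ae hae
  calc evar μ G (ev f) = ∫ ω, (v ω - (μ[v|G]) ω) ^ 2 ∂μ := hevar
    _ ≤ ∫ ω, v ω ^ 2 ∂μ := my_key hG μ hv
    _ = pvar μ u := hpvar.symm
    _ < min ε δ := hf
    _ ≤ ε := min_le_left _ _
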